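/- Let (W,S) be a Coxeter system and J, J' ⊆ S with W finite, and set w = w₀(J)·w₀(J∩J')·w₀(J'). Then in the parabolic decomposition of w with respect to J', one has w_{J'} = w₀(J') and w^{J'} = w₀(J)·w₀(J∩J'), and this product is length-additive. -/

import Mathlib

namespace CoxGeo

open CoxeterSystem Real

variable {B : Type*}

/-- Cosine matrix entries for the geometric representation. -/
noncomputable def gc (M : CoxeterMatrix B) (a b : B) : ℝ :=
  - Real.cos (Real.pi / (M a b : ℝ))

lemma gc_self (M : CoxeterMatrix B) (a : B) : gc M a a = 1 := by
  unfold gc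
  rw [M.diagonal a]
  norm_num

lemma gc_symm (M : CoxeterMatrix B) (a b : B) : gc M a b = gc M b a := by
  unfold gc
  rw [M.symmetric a b]

/-- The linear functional `v ↦ ⟨v, αₐ⟩`. -/
noncomputable def ip (M : CoxeterMatrix B) (a : B) : (B →₀ ℝ) →ₗ[ℝ] ℝ :=
  Finsupp.linearCombination ℝ (fun b => gc M b a)

lemma ip_single (M : CoxeterMatrix B) (a b : B) :
    ip M a (Finsupp.single b 1) = gc M b a := by
  unfold ip
  rw [Finsupp.linearCombination_single, one_smul]

/-- The geometric reflection associated to `a`. -/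
noncomputable def grefl (M : CoxeterMatrix B) (a : B) : Module.End ℝ (B →₀ ℝ) :=
  LinearMap.id - (2 : ℝ) • ((ip M a).smulRight (Finsupp.single a 1))

lemma grefl_apply (M : CoxeterMatrix B) (a : B) (v : B →₀ ℝ) :
    grefl M a v = v - (2 * ip M a v) • Finsupp.single a 1 := by
  unfold grefl
  simp [LinearMap.smulRight_apply, mul_smul, smul_smul]

lemma ip_grefl (M : CoxeterMatrix B) (a : B) (v : B →₀ ℝ) :
    ip M a (grefl M a v) = - ip M a v := by
  rw [grefl_apply, map_sub, map_smul, ip_single, gc_self]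
  simp
  ring

lemma grefl_sq (M : CoxeterMatrix B) (a : B) : grefl M a * grefl M a = 1 := by
  apply LinearMap.ext
  intro v
  show grefl M a (grefl M a v) = v
  rw [grefl_apply M a (grefl M a v), ip_grefl, grefl_apply]
  module

lemma grefl_fixed (M : CoxeterMatrix B) (a : B) (v : B →₀ ℝ) (h : ip M a v = 0) :
    grefl M a v = v := by
  rw [grefl_apply, h]
  simp

lemma grefl_liftable (M : CoxeterMatrix B) : M.IsLiftable (fun a => grefl M a) := by
  intro a b
  show (grefl M a * grefl M b) ^ M a b = 1
  rcases eq_or_ne a b with rfl | hab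
  · rw [M.diagonal, pow_one]
    exact grefl_sq M a
  rcases Nat.eq_zero_or_pos (M a b) with h0 | hpos
  · rw [h0, pow_zero]
  have hm2 : 2 ≤ M a b := by
    have := M.off_diagonal a b hab
    omega
  set m := M a b with hm
  set θ : ℝ := Real.pi / (m : ℝ) with hθ
  have hmR : (2:ℝ) ≤ (m:ℝ) := by exact_mod_cast hm2
  have hθpos : 0 < θ := by
    rw [hθ]
    positivity
  have hθlt : θ < Real.pi := by
    rw [hθ, div_lt_iff₀ (by linarith : (0:ℝ) < (m:ℝ))]
    nlinarith [Real.pi_pos]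
  have hsin : Real.sin θ ≠ 0 := ne_of_gt (Real.sin_pos_of_pos_of_lt_pi hθpos hθlt)
  set c : ℝ := Real.cos θ with hc
  have hgcab : gc M a b = -c := by
    rw [gc, hc, hθ, ← hm]
  have hgcba : gc M b a = -c := by
    rw [← gc_symm, hgcab]
  set S : ℤ → ℝ := fun n => Real.sin ((n : ℝ) * θ) / Real.sin θ with hS
  have hS0 : S 0 = 0 := by simp [hS]
  have hS1 : S 1 = 1 := by
    simp only [hS, Int.cast_one, one_mul]
    exact div_self hsin
  have hSneg1 : S (-1) = -1 := by
    simp only [hS]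
    push_cast
    rw [neg_one_mul, Real.sin_neg, neg_div]
    rw [div_self hsin]
  have hrec : ∀ n : ℤ, S (n + 1) = 2 * c * S n - S (n - 1) := by
    intro n
    simp only [hS]
    have h1 : ((n + 1 : ℤ) : ℝ) * θ = (n : ℝ) * θ + θ := by push_cast; ring
    have h2 : ((n - 1 : ℤ) : ℝ) * θ = (n : ℝ) * θ - θ := by push_cast; ring
    rw [h1, h2, Real.sin_add, Real.sin_sub, hc]
    field_simp
    ring
  clear_value S m θ c
  set ea := Finsupp.single a (1:ℝ) with hea
  set eb := Finsupp.single b (1:ℝ) with heb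
  have hipa_ea : ip M a ea = 1 := by rw [hea, ip_single, gc_self]
  have hipb_eb : ip M b eb = 1 := by rw [heb, ip_single, gc_self]
  have hipa_eb : ip M a eb = -c := by rw [heb, ip_single, hgcba]
  have hipb_ea : ip M b ea = -c := by rw [hea, ip_single, hgcab]
  have hra_ea : grefl M a ea = -ea := by
    rw [grefl_apply, hipa_ea]
    rw [← hea]
    module
  have hra_eb : grefl M a eb = eb + (2*c) • ea := by
    rw [grefl_apply, hipa_eb, ← hea]
    module
  have hrb_eb : grefl M b eb = -eb := by
    rw [grefl_apply, hipb_eb, ← heb]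
    module
  have hrb_ea : grefl M b ea = ea + (2*c) • eb := by
    rw [grefl_apply, hipb_ea, ← heb]
    module
  clear_value ea eb
  set ρ := grefl M a * grefl M b with hρ
  have hρ_apply : ∀ v, ρ v = grefl M a (grefl M b v) := fun v => rfl
  have hρ_ea : ρ ea = (4*c^2-1) • ea + (2*c) • eb := by
    rw [hρ_apply, hrb_ea, map_add, map_smul, hra_ea, hra_eb]
    module
  have hρ_eb : ρ eb = (-(2*c)) • ea + (-1 : ℝ) • eb := by
    rw [hρ_apply, hrb_eb, map_neg, hra_eb]
    module
  have hiter : ∀ k : ℕ, (ρ ^ k) ea = S (2*(k:ℤ)+1) • ea + S (2*(k:ℤ)) • eb ∧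
      (ρ ^ k) eb = (- S (2*(k:ℤ))) • ea + (- S (2*(k:ℤ)-1)) • eb := by
    intro k
    induction k with
    | zero =>
      constructor
      · show ea = _
        norm_num [hS0, hS1]
      · show eb = _
        norm_num [hS0, hSneg1]
    | succ k ih =>
      have hpow : ∀ v, (ρ ^ (k+1)) v = ρ ((ρ ^ k) v) := by
        intro v
        rw [pow_succ']
        rfl
      have e1 : S (2*((k:ℤ)+1)) = 2 * c * S (2*(k:ℤ)+1) - S (2*(k:ℤ)) := by
        have := hrec (2*(k:ℤ)+1)
        have h2 : 2*((k:ℤ)+1) = (2*(k:ℤ)+1) + 1 := by ring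
        have h3 : 2*(k:ℤ)+1-1 = 2*(k:ℤ) := by ring
        rw [h2, this, h3]
      have e2 : S (2*((k:ℤ)+1)+1) = 2 * c * S (2*((k:ℤ)+1)) - S (2*(k:ℤ)+1) := by
        have := hrec (2*(k:ℤ)+2)
        have h2 : 2*((k:ℤ)+1)+1 = (2*(k:ℤ)+2) + 1 := by ring
        have h3 : 2*(k:ℤ)+2-1 = 2*(k:ℤ)+1 := by ring
        have h4 : 2*((k:ℤ)+1) = 2*(k:ℤ)+2 := by ring
        rw [h2, this, h3, h4]
      have e3 : S (2*(k:ℤ)+1) = 2 * c * S (2*(k:ℤ)) - S (2*(k:ℤ)-1) := by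
        have := hrec (2*(k:ℤ))
        rw [this]
      constructor
      · rw [hpow, ih.1, map_add, map_smul, map_smul, hρ_ea, hρ_eb]
        have hcast : (((k+1 : ℕ)):ℤ) = (k:ℤ)+1 := by push_cast; ring
        rw [hcast, e2, e1, e3]
        module
      · rw [hpow, ih.2, map_add, map_smul, map_smul, hρ_ea, hρ_eb]
        have hcast : (((k+1 : ℕ)):ℤ) = (k:ℤ)+1 := by push_cast; ring
        have harg : 2*((k:ℤ)+1)-1 = 2*(k:ℤ)+1 := by ring
        rw [hcast, harg, e1, e3]
        module
  have h2m : ((2*(m:ℤ) : ℤ) : ℝ) * θ = 2 * Real.pi := by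
    push_cast
    rw [hθ]
    field_simp
  have hS2m : S (2*(m:ℤ)) = 0 := by
    simp only [hS]
    rw [h2m, Real.sin_two_pi, zero_div]
  have hS2m1 : S (2*(m:ℤ)+1) = 1 := by
    simp only [hS]
    have : ((2*(m:ℤ)+1 : ℤ) : ℝ) * θ = θ + 2 * Real.pi := by
      push_cast
      push_cast at h2m
      linear_combination h2m
    rw [this, Real.sin_add_two_pi]
    exact div_self hsin
  have hS2msub : S (2*(m:ℤ)-1) = -1 := by
    simp only [hS]
    have : ((2*(m:ℤ)-1 : ℤ) : ℝ) * θ = 2 * Real.pi - θ := by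
      push_cast
      push_cast at h2m
      linear_combination h2m
    rw [this, Real.sin_two_pi_sub, neg_div, div_self hsin]
  have hfix_ea : (ρ ^ m) ea = ea := by
    rw [(hiter m).1, hS2m1, hS2m]
    module
  have hfix_eb : (ρ ^ m) eb = eb := by
    rw [(hiter m).2, hS2m, hS2msub]
    module
  have hdet : 1 - c^2 ≠ 0 := by
    have hpy : Real.sin θ ^ 2 + Real.cos θ ^ 2 = 1 := Real.sin_sq_add_cos_sq θ
    have : 1 - c^2 = Real.sin θ ^ 2 := by rw [hc]; linarith
    rw [this]
    positivity
  apply LinearMap.ext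
  intro v
  show (ρ ^ m) v = v
  set α := ip M a v with hα
  set β := ip M b v with hβ
  set x := (α + c*β)/(1-c^2) with hx
  set y := (β + c*α)/(1-c^2) with hy
  set v0 := v - x • ea - y • eb with hv0
  have hva : ip M a v0 = 0 := by
    rw [hv0, map_sub, map_sub, map_smul, map_smul, hipa_ea, hipa_eb, ← hα]
    rw [hx, hy]
    simp only [smul_eq_mul]
    field_simp
    ring
  have hvb : ip M b v0 = 0 := by
    rw [hv0, map_sub, map_sub, map_smul, map_smul, hipb_ea, hipb_eb, ← hβ]
    rw [hx, hy]
    simp only [smul_eq_mul]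
    field_simp
    ring
  have hρv0 : ρ v0 = v0 := by
    rw [hρ_apply, grefl_fixed M b v0 hvb, grefl_fixed M a v0 hva]
  have hρmv0 : ∀ k : ℕ, (ρ ^ k) v0 = v0 := by
    intro k
    induction k with
    | zero => rfl
    | succ k ih =>
      rw [pow_succ']
      show ρ ((ρ ^ k) v0) = v0
      rw [ih, hρv0]
  have hv : v = x • ea + y • eb + v0 := by
    rw [hv0]
    module
  rw [hv, map_add, map_add, map_smul, map_smul, hfix_ea, hfix_eb, hρmv0]

variable {W : Type*} [Group W] {M : CoxeterMatrix B}

/-- The geometric representation of a Coxeter group. -/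
noncomputable def PhiGeo (cs : CoxeterSystem M W) : W →* Module.End ℝ (B →₀ ℝ) :=
  cs.lift ⟨fun a => grefl M a, grefl_liftable M⟩

lemma simple_injective (cs : CoxeterSystem M W) : Function.Injective cs.simple := by
  intro i j h
  by_contra hij
  have h1 : grefl M i = grefl M j := by
    have h2 := congrArg (PhiGeo cs) h
    rwa [PhiGeo, cs.lift_apply_simple, cs.lift_apply_simple] at h2
  have hL : (grefl M i) (Finsupp.single i (1:ℝ)) = - Finsupp.single i 1 := by
    rw [grefl_apply, ip_single, gc_self]
    module
  have hR : (grefl M j) (Finsupp.single i (1:ℝ))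
      = Finsupp.single i 1 - (2 * gc M i j) • Finsupp.single j 1 := by
    rw [grefl_apply, ip_single]
  have hv1 : ((grefl M i) (Finsupp.single i (1:ℝ))) i = -1 := by
    rw [hL]
    simp
  have hv2 : ((grefl M i) (Finsupp.single i (1:ℝ))) i = 1 := by
    rw [h1, hR]
    rw [Finsupp.sub_apply, Finsupp.smul_apply, Finsupp.single_eq_same,
      Finsupp.single_eq_of_ne' (Ne.symm hij)]
    simp
  rw [hv1] at hv2
  norm_num at hv2

end CoxGeo



namespace CoxAux

open CoxeterSystem List
open scoped Classical

variable {B : Type*} {W : Type*} [Group W] {M : CoxeterMatrix B} (cs : CoxeterSystem M W)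

local prefix:100 "σ" => cs.simple
local prefix:100 "π" => cs.wordProd
local prefix:100 "ℓ" => cs.length

/-- The involution on `W × ZMod 2` associated to a simple reflection. -/
noncomputable def sigmaFun (i : B) : W × ZMod 2 → W × ZMod 2 :=
  fun p => (σ i * p.1 * σ i, p.2 + if p.1 = σ i then 1 else 0)

lemma sigmaFun_invol (i : B) : Function.Involutive (sigmaFun cs i) := by
  intro p
  simp only [sigmaFun]
  refine Prod.ext ?_ ?_
  · simp [mul_assoc]
  · have h : (σ i * p.1 * σ i = σ i) ↔ (p.1 = σ i) := by
      constructor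
      · intro h
        have := congrArg (fun x => σ i * x * σ i) h
        simpa [mul_assoc] using this
      · intro h; rw [h]; simp
    by_cases hp : p.1 = σ i <;> simp [hp, h]
    · show p.2 + 1 + 1 = p.2
      have : (1 + 1 : ZMod 2) = 0 := by decide
      rw [add_assoc, this, add_zero]

/-- The permutation of `W × ZMod 2` associated to a simple reflection. -/
noncomputable def sigma (i : B) : Equiv.Perm (W × ZMod 2) :=
  (sigmaFun_invol cs i).toPerm

lemma sigma_apply (i : B) (p : W × ZMod 2) :
    sigma cs i p = (σ i * p.1 * σ i, p.2 + if p.1 = σ i then 1 else 0) := rfl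

private lemma conj_eq_iff (g a b : W) : g * a * g⁻¹ = b ↔ a = g⁻¹ * b * g := by
  constructor
  · intro h; rw [← h]; group
  · intro h; rw [h]; group

lemma sigma_liftable : M.IsLiftable (fun i => sigma cs i) := by
  intro i j
  rcases Nat.eq_zero_or_pos (M i j) with h0 | hpos
  · rw [h0, pow_zero]
  set m := M i j with hm
  set p : W := σ i * σ j with hp
  have hpm : p ^ m = 1 := cs.simple_mul_simple_pow i j
  -- key commutation : σ j * p = p⁻¹ * σ j
  have hcomm : ∀ k : ℕ, σ j * p ^ k = (p⁻¹) ^ k * σ j := by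
    intro k
    induction k with
    | zero => simp
    | succ k ih =>
      rw [pow_succ, ← mul_assoc, ih]
      have h1 : σ j * p = p⁻¹ * σ j := by
        rw [hp]; simp [mul_assoc]
      rw [mul_assoc, h1, ← mul_assoc, ← pow_succ]
  -- the two conjugates appearing in one step
  have key : ∀ k : ℕ, (p ^ k)⁻¹ * σ j * p ^ k = (p⁻¹) ^ (2 * k) * σ j ∧
      (p ^ k)⁻¹ * (σ j * σ i * σ j) * p ^ k = (p⁻¹) ^ (2 * k + 1) * σ j := by
    intro k
    have hinv : (p ^ k)⁻¹ = (p⁻¹) ^ k := by rw [inv_pow]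
    constructor
    · rw [mul_assoc, hcomm k, hinv, ← mul_assoc, ← pow_add, two_mul]
    · have hji : σ j * σ i * σ j = p⁻¹ * σ j := by rw [hp]; simp [mul_assoc]
      rw [hji, mul_assoc, mul_assoc, hcomm k, hinv, ← mul_assoc, ← mul_assoc, ← pow_succ]
      rw [← pow_add]
      have : k + 1 + k = 2 * k + 1 := by omega
      rw [this]
  -- step computation
  have step : ∀ (t : W) (ε : ZMod 2),
      (sigma cs i * sigma cs j) (t, ε) =
        (p * t * p⁻¹, ε + ((if t = σ j then 1 else 0) +
          (if t = σ j * σ i * σ j then 1 else 0))) := by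
    intro t ε
    show sigma cs i (sigma cs j (t, ε)) = _
    rw [sigma_apply, sigma_apply]
    refine Prod.ext ?_ ?_
    · show σ i * (σ j * t * σ j) * σ i = p * t * p⁻¹
      rw [hp]; simp [mul_assoc]
    · show ε + (if t = σ j then 1 else 0) + (if σ j * t * σ j = σ i then 1 else 0) = _
      have : (σ j * t * σ j = σ i) ↔ (t = σ j * σ i * σ j) := by
        constructor
        · intro h
          have := congrArg (fun x => σ j * x * σ j) h
          simpa [mul_assoc] using this
        · intro h; rw [h]; simp [mul_assoc]
      simp only [this]
      ring
  -- iterate the step computation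
  have iter : ∀ (k : ℕ) (t : W) (ε : ZMod 2),
      ((sigma cs i * sigma cs j) ^ k) (t, ε) =
        (p ^ k * t * (p ^ k)⁻¹,
          ε + ∑ r ∈ Finset.range (2 * k),
            (if t = (p⁻¹) ^ r * σ j then (1 : ZMod 2) else 0)) := by
    intro k
    induction k with
    | zero => intro t ε; simp
    | succ k ih =>
      intro t ε
      rw [pow_succ']
      show (sigma cs i * sigma cs j) (((sigma cs i * sigma cs j) ^ k) (t, ε)) = _
      rw [ih, step]
      have e1 : (p ^ k * t * (p ^ k)⁻¹ = σ j) ↔ t = (p⁻¹) ^ (2 * k) * σ j := by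
        rw [conj_eq_iff, (key k).1]
      have e2 : (p ^ k * t * (p ^ k)⁻¹ = σ j * σ i * σ j) ↔
          t = (p⁻¹) ^ (2 * k + 1) * σ j := by
        rw [conj_eq_iff, (key k).2]
      refine Prod.ext ?_ ?_
      · show p * (p ^ k * t * (p ^ k)⁻¹) * p⁻¹ = p ^ (k + 1) * t * (p ^ (k + 1))⁻¹
        group
      · show (ε + ∑ r ∈ Finset.range (2 * k),
            (if t = (p⁻¹) ^ r * σ j then (1 : ZMod 2) else 0)) +
            ((if p ^ k * t * (p ^ k)⁻¹ = σ j then 1 else 0) +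
             (if p ^ k * t * (p ^ k)⁻¹ = σ j * σ i * σ j then 1 else 0)) = _
        simp only [e1, e2]
        have h2 : 2 * (k + 1) = (2 * k + 1) + 1 := by omega
        rw [h2, Finset.sum_range_succ, Finset.sum_range_succ]
        ring
  apply Equiv.ext
  rintro ⟨t, ε⟩
  rw [iter m t ε, hpm]
  refine Prod.ext ?_ ?_
  · simp
  · show ε + _ = (t, ε).2
    have hsum : ∑ r ∈ Finset.range (2 * m),
        (if t = (p⁻¹) ^ r * σ j then (1 : ZMod 2) else 0) = 0 := by
      have hps : (p⁻¹) ^ m = 1 := by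
        rw [inv_pow, hpm, inv_one]
      rw [two_mul, Finset.sum_range_add]
      have : ∀ r, (if t = (p⁻¹) ^ (m + r) * σ j then (1 : ZMod 2) else 0) =
          (if t = (p⁻¹) ^ r * σ j then (1 : ZMod 2) else 0) := by
        intro r
        rw [pow_add, hps, one_mul]
      simp only [this]
      exact CharTwo.add_self_eq_zero _
    rw [hsum, add_zero]

/-- The reflection-parity representation of `W`. -/
noncomputable def Phi : W →* Equiv.Perm (W × ZMod 2) :=
  cs.lift ⟨fun i => sigma cs i, sigma_liftable cs⟩

lemma Phi_simple (i : B) : Phi cs (σ i) = sigma cs i :=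
  cs.lift_apply_simple (sigma_liftable cs) i

/-- Parity of the number of occurrences of `t` in an inversion sequence for `w`. -/
noncomputable def eta (w t : W) : ZMod 2 := (Phi cs w (t, 0)).2

lemma eta_one (t : W) : eta cs 1 t = 0 := by
  unfold eta
  rw [map_one]
  rfl

lemma Phi_apply (w : W) : ∀ (t : W) (ε : ZMod 2),
    Phi cs w (t, ε) = (w * t * w⁻¹, ε + eta cs w t) := by
  induction w using cs.simple_induction_left with
  | one => intro t ε; simp [eta_one]
  | mul_simple_left w i ih =>
    intro t ε
    have h1 : Phi cs (σ i * w) (t, ε) = sigma cs i (Phi cs w (t, ε)) := by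
      rw [map_mul, Phi_simple]; rfl
    have h2 : eta cs (σ i * w) t = (0 + eta cs w t) +
        (if w * t * w⁻¹ = σ i then 1 else 0) := by
      show (Phi cs (σ i * w) (t, 0)).2 = _
      have h3 : Phi cs (σ i * w) (t, 0) = sigma cs i (Phi cs w (t, 0)) := by
        rw [map_mul, Phi_simple]; rfl
      rw [h3, ih, sigma_apply]
    rw [h1, ih, sigma_apply]
    refine Prod.ext ?_ ?_
    · show σ i * (w * t * w⁻¹) * σ i = (σ i * w) * t * (σ i * w)⁻¹
      simp [mul_assoc]
    · show (ε + eta cs w t) + (if w * t * w⁻¹ = σ i then 1 else 0) = ε + eta cs (σ i * w) t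
      rw [h2]; ring

lemma eta_mul (w v t : W) :
    eta cs (w * v) t = eta cs v t + eta cs w (v * t * v⁻¹) := by
  have h1 : Phi cs (w * v) (t, 0) = Phi cs w (Phi cs v (t, 0)) := by
    rw [map_mul]; rfl
  show (Phi cs (w * v) (t, 0)).2 = _
  rw [h1, Phi_apply cs v, Phi_apply cs w]
  show (0 + eta cs v t) + eta cs w (v * t * v⁻¹) = _
  ring

lemma eta_simple (i : B) (t : W) :
    eta cs (σ i) t = if t = σ i then 1 else 0 := by
  show (Phi cs (σ i) (t, 0)).2 = _
  rw [Phi_simple, sigma_apply]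
  show 0 + _ = _
  rw [zero_add]

lemma mem_rightInvSeq_of_eta_eq_one {ω : List B} {t : W} (h : eta cs (π ω) t = 1) :
    t ∈ cs.rightInvSeq ω := by
  induction ω with
  | nil =>
    rw [wordProd_nil, eta_one] at h
    exact absurd h (by decide)
  | cons i ω ih =>
    have hc : eta cs (π (i :: ω)) t = eta cs (π ω) t +
        (if (π ω) * t * (π ω)⁻¹ = σ i then 1 else 0) := by
      rw [wordProd_cons, eta_mul, eta_simple]
    show t ∈ ((π ω)⁻¹ * σ i * (π ω)) :: cs.rightInvSeq ω
    by_cases hp : (π ω) * t * (π ω)⁻¹ = σ i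
    · have : t = (π ω)⁻¹ * σ i * (π ω) := by
        rw [← hp]; group
      rw [this]
      exact List.mem_cons_self
    · refine List.mem_cons_of_mem _ (ih ?_)
      rw [hc, if_neg hp, add_zero] at h
      exact h

lemma length_lt_of_eta_eq_one {w t : W} (h : eta cs w t = 1) :
    ℓ (w * t) < ℓ w := by
  obtain ⟨ω, hred, rfl⟩ := cs.exists_reduced_word' w
  exact (cs.isRightInversion_of_mem_rightInvSeq hred
    (mem_rightInvSeq_of_eta_eq_one cs h)).2

lemma eta_refl_self {t : W} (ht : cs.IsReflection t) : eta cs t t = 1 := by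
  obtain ⟨w, i, rfl⟩ := ht
  have harg : w⁻¹ * (w * σ i * w⁻¹) * w⁻¹⁻¹ = σ i := by group
  have h0 : eta cs w⁻¹ (w * σ i * w⁻¹) + eta cs w (σ i) = 0 := by
    have h := eta_mul cs w w⁻¹ (w * σ i * w⁻¹)
    rw [harg] at h
    have h1 : w * w⁻¹ = 1 := by group
    rw [h1, eta_one] at h
    exact h.symm
  have hs : eta cs (σ i * w⁻¹) (w * σ i * w⁻¹)
      = eta cs w⁻¹ (w * σ i * w⁻¹) + 1 := by
    have h := eta_mul cs (σ i) w⁻¹ (w * σ i * w⁻¹)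
    rw [harg, eta_simple, if_pos rfl] at h
    exact h
  have hm : eta cs (w * (σ i * w⁻¹)) (w * σ i * w⁻¹)
      = eta cs (σ i * w⁻¹) (w * σ i * w⁻¹) + eta cs w (σ i) := by
    have harg2 : (σ i * w⁻¹) * (w * σ i * w⁻¹) * (σ i * w⁻¹)⁻¹ = σ i := by
      rw [mul_inv_rev, inv_simple]
      have : (σ i * w⁻¹) * (w * σ i * w⁻¹) = σ i * σ i * w⁻¹ := by group
      rw [this, simple_mul_simple_self, one_mul]
      group
    have h := eta_mul cs w (σ i * w⁻¹) (w * σ i * w⁻¹)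
    rw [harg2] at h
    exact h
  have hw : w * (σ i * w⁻¹) = w * σ i * w⁻¹ := by rw [mul_assoc]
  rw [hw] at hm
  rw [hm, hs]
  have : eta cs w⁻¹ (w * σ i * w⁻¹) + 1 + eta cs w (σ i)
      = (eta cs w⁻¹ (w * σ i * w⁻¹) + eta cs w (σ i)) + 1 := by ring
  rw [this, h0, zero_add]

lemma eta_eq_one_iff {w t : W} (ht : cs.IsReflection t) :
    eta cs w t = 1 ↔ ℓ (w * t) < ℓ w := by
  constructor
  · exact length_lt_of_eta_eq_one cs
  · intro hlt
    by_contra hne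
    have h0 : eta cs w t = 0 := by
      have : ∀ x : ZMod 2, x = 0 ∨ x = 1 := by decide
      rcases this (eta cs w t) with h | h
      · exact h
      · exact absurd h hne
    have hwt : (w * t) * t = w := by rw [mul_assoc, ht.mul_self, mul_one]
    have harg : t * t * t⁻¹ = t := by rw [ht.mul_self, one_mul, ht.inv]
    have h1 : eta cs ((w * t) * t) t = eta cs t t + eta cs (w * t) t := by
      have h := eta_mul cs (w * t) t t
      rw [harg] at h
      exact h
    rw [hwt, eta_refl_self cs ht, h0] at h1
    have h2 : eta cs (w * t) t = 1 := by
      have : ∀ x : ZMod 2, 0 = 1 + x → x = 1 := by decide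
      exact this _ h1
    have := length_lt_of_eta_eq_one cs h2
    rw [hwt] at this
    omega

lemma exchange {ω : List B} {t : W} (ht : cs.IsReflection t)
    (hlt : ℓ (π ω * t) < ℓ (π ω)) :
    ∃ j, j < ω.length ∧ π ω * t = π (ω.eraseIdx j) := by
  have h1 : eta cs (π ω) t = 1 := (eta_eq_one_iff cs ht).mpr hlt
  have hm := mem_rightInvSeq_of_eta_eq_one cs h1
  obtain ⟨j, hj, hget⟩ := List.mem_iff_getElem.mp hm
  have hj' : j < ω.length := by
    rwa [cs.length_rightInvSeq] at hj
  refine ⟨j, hj', ?_⟩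
  rw [← hget, ← List.getD_eq_getElem _ 1 hj, cs.wordProd_mul_getD_rightInvSeq]

lemma exists_reduced_word_subset (ω : List B) :
    ∃ ω' : List B, cs.IsReduced ω' ∧ π ω' = π ω ∧ ∀ b ∈ ω', b ∈ ω := by
  generalize hn : ω.length = n
  induction n using Nat.strong_induction_on generalizing ω with
  | _ n ih =>
  by_cases hred : cs.IsReduced ω
  · exact ⟨ω, hred, rfl, fun b hb => hb⟩
  · have hne : ω ≠ [] := by
      rintro rfl
      exact hred (by simp [CoxeterSystem.IsReduced])
    have hn1 : 1 ≤ n := by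
      rw [← hn]
      exact Nat.one_le_iff_ne_zero.mpr (by simpa using hne)
    have hP : ∃ j, ¬ cs.IsReduced (ω.take (j + 1)) := by
      refine ⟨n - 1, ?_⟩
      have : n - 1 + 1 = n := by omega
      rw [this, ← hn, List.take_length]
      exact hred
    classical
    let j := Nat.find hP
    have hj : ¬ cs.IsReduced (ω.take (j + 1)) := Nat.find_spec hP
    have hjle : j ≤ n - 1 := Nat.find_le (by
      have : n - 1 + 1 = n := by omega
      rw [this, ← hn, List.take_length]
      exact hred)
    have hjlt : j < ω.length := by omega
    have hredj : cs.IsReduced (ω.take j) := by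
      rcases Nat.eq_zero_or_pos j with h0 | hpos
      · rw [h0]
        simp [CoxeterSystem.IsReduced]
      · have hk : j - 1 < j := by omega
        have := Nat.find_min hP hk
        have hkk : j - 1 + 1 = j := by omega
        rw [hkk] at this
        exact not_not.mp this
    have htake : ω.take (j + 1) = ω.take j ++ [ω[j]] := (List.take_concat_get' ω j hjlt).symm
    have hlenj : (ω.take j).length = j := by
      rw [List.length_take]
      omega
    have hlj : ℓ (π (ω.take j)) = j := by
      rw [hredj, hlenj]
    have hlt : ℓ (π (ω.take j) * σ (ω[j])) < ℓ (π (ω.take j)) := by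
      have hne2 : ℓ (π (ω.take (j + 1))) ≠ (ω.take (j + 1)).length := hj
      have hle : ℓ (π (ω.take (j + 1))) ≤ (ω.take (j + 1)).length :=
        cs.length_wordProd_le _
      have hlen1 : (ω.take (j + 1)).length = j + 1 := by
        rw [List.length_take]
        omega
      have heq : π (ω.take (j + 1)) = π (ω.take j) * σ (ω[j]) := by
        rw [htake, wordProd_append, wordProd_singleton]
      rcases cs.length_mul_simple (π (ω.take j)) (ω[j]) with h | h
      · exfalso
        apply hne2
        rw [heq, h, hlj, hlen1]
      · omega
    obtain ⟨k, hk, hdel⟩ := exchange cs (cs.isReflection_simple (ω[j])) hlt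
    set ω₂ := ((ω.take j).eraseIdx k) ++ ω.drop (j + 1) with hω₂
    have hprod : π ω₂ = π ω := by
      have h1 : π ω = π (ω.take (j + 1)) * π (ω.drop (j + 1)) := by
        rw [← wordProd_append, List.take_append_drop]
      rw [hω₂, wordProd_append, ← hdel, h1, htake, wordProd_append, wordProd_singleton]
    have hlen2 : ω₂.length < n := by
      rw [hω₂, List.length_append]
      have h1 : ((ω.take j).eraseIdx k).length = j - 1 := by
        rw [List.length_eraseIdx, if_pos hk, hlenj]
      have h2 : (ω.drop (j + 1)).length = ω.length - (j + 1) := by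
        rw [List.length_drop]
      omega
    obtain ⟨ω', h1, h2, h3⟩ := ih ω₂.length hlen2 ω₂ rfl
    refine ⟨ω', h1, by rw [h2, hprod], ?_⟩
    intro b hb
    have hb2 := h3 b hb
    rw [hω₂] at hb2
    rcases List.mem_append.mp hb2 with h | h
    · exact List.take_subset j ω (List.eraseIdx_subset h)
    · exact List.drop_subset _ ω h

end CoxAux




namespace Cox

variable {B : Type*} {W : Type*} [Group W] {M : CoxeterMatrix B} (cs : CoxeterSystem M W)

/-- One step of Bruhat order: right-multiply by a reflection, increasing length. -/
def lt1 (u v : W) : Prop :=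
  (∃ t : W, cs.IsReflection t ∧ v = u * t) ∧ cs.length u < cs.length v

/-- The (strong) Bruhat order on `W`. -/
def le (u v : W) : Prop := Relation.ReflTransGen (lt1 cs) u v

/-- The support of `w`: the simple reflections lying below `w` in Bruhat order
(equivalently, appearing in any reduced word for `w`). -/
def supp (w : W) : Set B := {i | le cs (cs.simple i) w}

/-- The standard parabolic subgroup generated by the simple reflections in `K`. -/
def parab (K : Set B) : Subgroup W := Subgroup.closure (cs.simple '' K)

/-- `x` belongs to the parabolic quotient `W^K`: no right descents in `K`. -/
def InQuot (K : Set B) (x : W) : Prop :=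
  ∀ i ∈ K, cs.length x < cs.length (x * cs.simple i)

/-- The left descent set of `v`. -/
def DescL (v : W) : Set B := {i | cs.length (cs.simple i * v) < cs.length v}

/-- `x` is the longest element of the standard parabolic subgroup `W_K`. -/
def IsLongest (K : Set B) (x : W) : Prop :=
  x ∈ parab cs K ∧ ∀ y ∈ parab cs K, cs.length y ≤ cs.length x

end Cox

open Cox



namespace CoxAux

open CoxeterSystem List Cox

variable {B : Type*} {W : Type*} [Group W] {M : CoxeterMatrix B} (cs : CoxeterSystem M W)

local prefix:100 "σ" => cs.simple
local prefix:100 "π" => cs.wordProd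
local prefix:100 "ℓ" => cs.length

lemma wordProd_mem_parab {K : Set B} {ω : List B} (h : ∀ b ∈ ω, b ∈ K) :
    π ω ∈ parab cs K := by
  induction ω with
  | nil =>
    rw [wordProd_nil]
    exact one_mem _
  | cons i ω ih =>
    rw [wordProd_cons]
    exact mul_mem (Subgroup.subset_closure ⟨i, h i List.mem_cons_self, rfl⟩)
      (ih fun b hb => h b (List.mem_cons_of_mem _ hb))

lemma parab_mem_iff {K : Set B} {w : W} :
    w ∈ parab cs K ↔ ∃ ω : List B, (∀ b ∈ ω, b ∈ K) ∧ π ω = w := by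
  constructor
  · intro h
    induction h using Subgroup.closure_induction with
    | mem x hx =>
      obtain ⟨i, hi, rfl⟩ := hx
      exact ⟨[i], by simpa using hi, wordProd_singleton cs i⟩
    | one => exact ⟨[], by simp, wordProd_nil cs⟩
    | mul x y hx hy ihx ihy =>
      obtain ⟨ω₁, h1, p1⟩ := ihx
      obtain ⟨ω₂, h2, p2⟩ := ihy
      refine ⟨ω₁ ++ ω₂, ?_, by rw [wordProd_append, p1, p2]⟩
      intro b hb
      rcases List.mem_append.mp hb with h | h
      · exact h1 b h
      · exact h2 b h
    | inv x hx ih =>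
      obtain ⟨ω, h1, p1⟩ := ih
      refine ⟨ω.reverse, ?_, by rw [wordProd_reverse, p1]⟩
      intro b hb
      exact h1 b (List.mem_reverse.mp hb)
  · rintro ⟨ω, h, rfl⟩
    exact wordProd_mem_parab cs h

lemma exists_reduced_parab_word {K : Set B} {w : W} (h : w ∈ parab cs K) :
    ∃ ω : List B, cs.IsReduced ω ∧ (∀ b ∈ ω, b ∈ K) ∧ π ω = w := by
  obtain ⟨ω, hsub, hprod⟩ := (parab_mem_iff cs).mp h
  obtain ⟨ω', hred, hprod', hsub'⟩ := exists_reduced_word_subset cs ω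
  exact ⟨ω', hred, fun b hb => hsub b (hsub' b hb), by rw [hprod', hprod]⟩

lemma simple_mem_parab_iff {K : Set B} {i : B} :
    σ i ∈ parab cs K ↔ i ∈ K := by
  constructor
  · intro h
    obtain ⟨ω, hred, hsub, hprod⟩ := exists_reduced_parab_word cs h
    have hlen : ω.length = 1 := by
      have h1 : ℓ (π ω) = ω.length := hred
      rw [hprod, cs.length_simple] at h1
      omega
    obtain ⟨j, rfl⟩ := List.length_eq_one_iff.mp hlen
    have hji : σ j = σ i := by
      rw [← wordProd_singleton cs j, hprod]
    have := CoxGeo.simple_injective cs hji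
    subst this
    exact hsub j (List.mem_singleton_self j)
  · intro h
    exact Subgroup.subset_closure ⟨i, h, rfl⟩

lemma descent_exists {K : Set B} {w : W} (hw : w ∈ parab cs K) (hne : w ≠ 1) :
    ∃ i ∈ K, (ℓ (w * σ i) + 1 = ℓ w ∧ w * σ i ∈ parab cs K) := by
  obtain ⟨ω, hred, hsub, hprod⟩ := exists_reduced_parab_word cs hw
  have hne2 : ω ≠ [] := by
    rintro rfl
    rw [wordProd_nil] at hprod
    exact hne hprod.symm
  have hsplit : ω.dropLast ++ [ω.getLast hne2] = ω := List.dropLast_append_getLast hne2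
  set i := ω.getLast hne2 with hi
  have hprod2 : w = π ω.dropLast * σ i := by
    conv_lhs => rw [← hprod, ← hsplit]
    rw [wordProd_append, wordProd_singleton]
  have hwsi : w * σ i = π ω.dropLast := by
    rw [hprod2, mul_assoc, simple_mul_simple_self, mul_one]
  have hlenw : ℓ w = ω.length := by rw [← hprod]; exact hred
  have hlen1 : ℓ (w * σ i) ≤ ω.length - 1 := by
    rw [hwsi]
    calc ℓ (π ω.dropLast) ≤ ω.dropLast.length := cs.length_wordProd_le _
    _ = ω.length - 1 := by rw [List.length_dropLast]
  have hlenpos : 1 ≤ ω.length := by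
    rcases ω with _ | ⟨x, l⟩
    · exact absurd rfl hne2
    · simp
  refine ⟨i, hsub i (List.getLast_mem hne2), ?_, ?_⟩
  · rcases cs.length_mul_simple w i with h | h
    · omega
    · omega
  · rw [hwsi]
    exact wordProd_mem_parab cs (fun b hb => hsub b (List.dropLast_subset ω hb))

lemma longest_mul_refl_lt {K : Set B} {x t : W} (hx : IsLongest cs K x)
    (ht : cs.IsReflection t) (htK : t ∈ parab cs K) : ℓ (x * t) < ℓ x :=
  lt_of_le_of_ne (hx.2 _ (mul_mem hx.1 htK)) (ht.length_mul_left_ne x)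

lemma min_coset_additive {K : Set B} {u : W}
    (hmin : ∀ z ∈ parab cs K, ℓ u ≤ ℓ (u * z)) :
    ∀ v ∈ parab cs K, ℓ (u * v) = ℓ u + ℓ v := by
  intro v hv
  generalize hn : ℓ v = n
  induction n using Nat.strong_induction_on generalizing v with
  | _ n ih =>
  rcases eq_or_ne v 1 with rfl | hne
  · rw [cs.length_one] at hn
    rw [mul_one, ← hn, add_zero]
  obtain ⟨i, hiK, hlen, hmem⟩ := descent_exists cs hv hne
  have hlt : ℓ (v * σ i) < n := by omega
  have ih1 : ℓ (u * (v * σ i)) = ℓ u + ℓ (v * σ i) := ih _ hlt _ hmem rfl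
  have hveq : u * (v * σ i) * σ i = u * v := by
    rw [mul_assoc, mul_assoc, simple_mul_simple_self, mul_one]
  rcases cs.length_mul_simple (u * (v * σ i)) i with h | h
  · rw [hveq] at h
    rw [h, ih1]
    omega
  · exfalso
    rw [hveq] at h
    obtain ⟨ω, hredω, hprodω⟩ := cs.exists_reduced_word' u
    obtain ⟨ψ, hredψ, hsubψ, hprodψ⟩ := exists_reduced_parab_word cs hmem
    have hconc : π (ω ++ ψ) = u * (v * σ i) := by
      rw [wordProd_append, ← hprodω, hprodψ]
    have hlenω : ω.length = ℓ u := by rw [hprodω]; exact hredω.symm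
    have hlenψ : ψ.length = ℓ (v * σ i) := by
      have h1 : ℓ (π ψ) = ψ.length := hredψ
      rw [hprodψ] at h1
      omega
    have hredc : cs.IsReduced (ω ++ ψ) := by
      show ℓ (π (ω ++ ψ)) = (ω ++ ψ).length
      rw [hconc, List.length_append, ih1, hlenω, hlenψ]
    have hlt2 : ℓ (π (ω ++ ψ) * σ i) < ℓ (π (ω ++ ψ)) := by
      rw [hconc, hveq]
      omega
    obtain ⟨j, hj, hdel⟩ := exchange cs (cs.isReflection_simple i) hlt2
    rw [List.length_append] at hj
    rcases lt_or_ge j ω.length with hcase | hcase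
    · rw [List.eraseIdx_append_of_lt_length hcase] at hdel
      have hz : (v * σ i) * σ i * (v * σ i)⁻¹ ∈ parab cs K :=
        mul_mem (mul_mem hmem ((simple_mem_parab_iff cs).mpr hiK)) (inv_mem hmem)
      have hu2 : u * ((v * σ i) * σ i * (v * σ i)⁻¹) = π (ω.eraseIdx j) := by
        have h1 : π (ω.eraseIdx j ++ ψ) = π (ω.eraseIdx j) * (v * σ i) := by
          rw [wordProd_append, hprodψ]
        have h2 : π (ω ++ ψ) * σ i = u * (v * σ i) * σ i := by rw [hconc]
        rw [h2] at hdel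
        rw [h1] at hdel
        calc u * ((v * σ i) * σ i * (v * σ i)⁻¹)
            = (u * (v * σ i) * σ i) * (v * σ i)⁻¹ := by group
          _ = (π (ω.eraseIdx j) * (v * σ i)) * (v * σ i)⁻¹ := by rw [hdel]
          _ = π (ω.eraseIdx j) := by group
      have hlen2 : ℓ (u * ((v * σ i) * σ i * (v * σ i)⁻¹)) ≤ ω.length - 1 := by
        rw [hu2]
        calc ℓ (π (ω.eraseIdx j)) ≤ (ω.eraseIdx j).length := cs.length_wordProd_le _
          _ = ω.length - 1 := by rw [List.length_eraseIdx, if_pos hcase]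
      have hmin2 := hmin _ hz
      omega
    · rw [List.eraseIdx_append_of_length_le hcase] at hdel
      have hveq2 : v = π (ψ.eraseIdx (j - ω.length)) := by
        have h1 : π (ω ++ ψ.eraseIdx (j - ω.length)) = u * π (ψ.eraseIdx (j - ω.length)) := by
          rw [wordProd_append, hprodω]
      
        have h2 : π (ω ++ ψ) * σ i = u * v := by
          rw [hconc, hveq]
        rw [h2, h1] at hdel
        exact mul_left_cancel hdel
      have hlt3 : ℓ v ≤ (ψ.eraseIdx (j - ω.length)).length := by
        rw [hveq2]
        exact cs.length_wordProd_le _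
      have hjψ : j - ω.length < ψ.length := by omega
      rw [List.length_eraseIdx, if_pos hjψ] at hlt3
      omega

end CoxAux


open Cox

theorem stmt6 {B W : Type*} [Group W] [Finite W] {M : CoxeterMatrix B}
    (cs : CoxeterSystem M W) (J Jp : Set B) (wJ wI wJp : W)
    (hJ : IsLongest cs J wJ) (hI : IsLongest cs (J ∩ Jp) wI) (hJp : IsLongest cs Jp wJp) :
    InQuot cs Jp (wJ * wI) ∧ wJp ∈ parab cs Jp ∧
      cs.length (wJ * wI * wJp) = cs.length (wJ * wI) + cs.length wJp := by
  classical
  have hParSub : parab cs (J ∩ Jp) ≤ parab cs J :=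
    Subgroup.closure_mono (Set.image_mono Set.inter_subset_left)
  have hu : wJ * wI ∈ parab cs J := mul_mem hJ.1 (hParSub hI.1)
  have hquot : InQuot cs Jp (wJ * wI) := by
    intro i hi
    have hne := cs.length_mul_simple_ne (wJ * wI) i
    rcases cs.length_mul_simple (wJ * wI) i with h | h
    · omega
    · exfalso
      have hlt : cs.length ((wJ * wI) * cs.simple i) < cs.length (wJ * wI) := by omega
      obtain ⟨ω, hred, hsub, hprod⟩ := CoxAux.exists_reduced_parab_word cs hu
      have hlt2 : cs.length (cs.wordProd ω * cs.simple i) < cs.length (cs.wordProd ω) := by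
        rw [hprod]
        exact hlt
      obtain ⟨j, hj, hdel⟩ := CoxAux.exchange cs (cs.isReflection_simple i) hlt2
      have hsimem : cs.simple i ∈ parab cs J := by
        have heq : cs.simple i = (cs.wordProd ω)⁻¹ * cs.wordProd (ω.eraseIdx j) := by
          rw [← hdel]
          group
        rw [heq]
        refine mul_mem (inv_mem ?_) ?_
        · rw [hprod]
          exact hu
        · exact CoxAux.wordProd_mem_parab cs
            (fun b hb => hsub b (List.eraseIdx_subset hb))
      have hiJ : i ∈ J := (CoxAux.simple_mem_parab_iff cs).mp hsimem
      have hsiI : cs.simple i ∈ parab cs (J ∩ Jp) :=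
        (CoxAux.simple_mem_parab_iff cs).mpr ⟨hiJ, hi⟩
      have h1 : CoxAux.eta cs wI (cs.simple i) = 1 :=
        (CoxAux.eta_eq_one_iff cs (cs.isReflection_simple i)).mpr
          (CoxAux.longest_mul_refl_lt cs hI (cs.isReflection_simple i) hsiI)
      have hrefl2 : cs.IsReflection (wI * cs.simple i * wI⁻¹) :=
        (cs.isReflection_simple i).conj wI
      have hmem2 : wI * cs.simple i * wI⁻¹ ∈ parab cs J :=
        mul_mem (mul_mem (hParSub hI.1) hsimem) (inv_mem (hParSub hI.1))
      have h2 : CoxAux.eta cs wJ (wI * cs.simple i * wI⁻¹) = 1 :=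
        (CoxAux.eta_eq_one_iff cs hrefl2).mpr
          (CoxAux.longest_mul_refl_lt cs hJ hrefl2 hmem2)
      have h3 : CoxAux.eta cs (wJ * wI) (cs.simple i) = 1 :=
        (CoxAux.eta_eq_one_iff cs (cs.isReflection_simple i)).mpr hlt
      rw [CoxAux.eta_mul, h1, h2] at h3
      exact absurd h3 (by decide)
  refine ⟨hquot, hJp.1, ?_⟩
  have hP : ∃ n, ∃ z ∈ parab cs Jp, cs.length ((wJ * wI) * z) = n :=
    ⟨cs.length (wJ * wI), 1, one_mem _, by rw [mul_one]⟩
  obtain ⟨z₀, hz₀, hlen₀⟩ := Nat.find_spec hP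
  have hmin₀ : ∀ z ∈ parab cs Jp,
      cs.length ((wJ * wI) * z₀) ≤ cs.length (((wJ * wI) * z₀) * z) := by
    intro z hz
    have hPz : ∃ z' ∈ parab cs Jp,
        cs.length ((wJ * wI) * z') = cs.length (((wJ * wI) * z₀) * z) :=
      ⟨z₀ * z, mul_mem hz₀ hz, by rw [← mul_assoc]⟩
    have := Nat.find_min' hP ⟨_, hPz.choose_spec.1, hPz.choose_spec.2⟩
    omega
  have hadd := CoxAux.min_coset_additive cs hmin₀
  have hz₀1 : z₀ = 1 := by
    by_contra hz1
    have hz0inv : z₀⁻¹ ∈ parab cs Jp := inv_mem hz₀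
    have hz0inv_ne : z₀⁻¹ ≠ 1 := fun h => hz1 (by rwa [inv_eq_one] at h)
    obtain ⟨i, hiJp, hlen, hmem⟩ := CoxAux.descent_exists cs hz0inv hz0inv_ne
    have e0 : wJ * wI = ((wJ * wI) * z₀) * z₀⁻¹ := by group
    have e1 : (wJ * wI) * cs.simple i = ((wJ * wI) * z₀) * (z₀⁻¹ * cs.simple i) := by
      group
    have h1 : cs.length (wJ * wI) =
        cs.length ((wJ * wI) * z₀) + cs.length z₀⁻¹ := by
      have h := hadd z₀⁻¹ hz0inv
      rw [← e0] at h
      exact h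
    have h2 : cs.length ((wJ * wI) * cs.simple i) =
        cs.length ((wJ * wI) * z₀) + cs.length (z₀⁻¹ * cs.simple i) := by
      rw [e1]
      exact hadd _ hmem
    have := hquot i hiJp
    omega
  rw [hz₀1, mul_one] at hmin₀
  exact CoxAux.min_coset_additive cs hmin₀ wJp hJp.1
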